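/- For d > 2 and α > 0, define F_α : ℝ^d → ℝ^d by F_α(x) = x/(α‖x‖²) for x ≠ 0 and F_α(0) = 0. Then for X standard Gaussian in ℝ^d, E[‖F_α(X)‖²] = 1/(α²(d−2)), and consequently E[‖F_α(X)‖²] → 0 as α → ∞. -/

import Mathlib

open MeasureTheory Real Filter
open scoped Classical

/-- The map `F_α(x) = x / (α ‖x‖²)` for `x ≠ 0`, `F_α(0) = 0`. -/

noncomputable def Fmap (d : ℕ) (α : ℝ) (x : EuclideanSpace ℝ (Fin d)) :
    EuclideanSpace ℝ (Fin d) :=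
  if x = 0 then 0 else (α * ‖x‖ ^ 2)⁻¹ • x

theorem deepSVDD_key (d : ℕ) (hd : 2 < d) (α : ℝ) (hα : 0 < α) :
    ∫ x : EuclideanSpace ℝ (Fin d),
        ‖Fmap d α x‖ ^ 2 * ((2 * π) ^ (-(d : ℝ) / 2) * Real.exp (-‖x‖ ^ 2 / 2)) =
        1 / (α ^ 2 * ((d : ℝ) - 2)) := by
  haveI : Nonempty (Fin d) := ⟨⟨0, by omega⟩⟩
  haveI : Nontrivial (EuclideanSpace ℝ (Fin d)) := inferInstance
  have hd3 : (3 : ℝ) ≤ (d : ℝ) := by exact_mod_cast hd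
  set E := EuclideanSpace ℝ (Fin d)
  set C : ℝ := (2 * π) ^ (-(d : ℝ) / 2) with hC
  set V : ℝ := (volume (Metric.ball (0 : E) 1)).toReal with hV
  set f : ℝ → ℝ := fun r => (α ^ 2 * r ^ 2)⁻¹ * (C * Real.exp (-(1/2) * r ^ (2:ℝ))) with hf
  set g : ℝ → ℝ := fun r => Real.exp (-(1/2) * r ^ (2:ℝ)) with hg
  have hdim : Module.finrank ℝ E = d := finrank_euclideanSpace_fin
  set G : ℝ := Real.Gamma (((d:ℝ) - 2) / 2) with hG
  set P : ℝ := (1/2 : ℝ) ^ (-(((d:ℝ) - 2)) / 2) with hP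
  set Q : ℝ := (2 * π) ^ ((d:ℝ) / 2) with hQ
  have hGpos : 0 < G := Real.Gamma_pos_of_pos (by linarith)
  have hPpos : 0 < P := Real.rpow_pos_of_pos (by norm_num) _
  have hQpos : 0 < Q := Real.rpow_pos_of_pos (by positivity) _
  -- rewrite the norm of Fmap
  have hnorm : ∀ x : E, ‖Fmap d α x‖ ^ 2 = (α ^ 2 * ‖x‖ ^ 2)⁻¹ := by
    intro x
    by_cases hx : x = 0
    · simp [Fmap, hx]
    · have hx0 : (0:ℝ) < ‖x‖ := norm_pos_iff.2 hx
      simp only [Fmap, if_neg hx, norm_smul, norm_inv, Real.norm_eq_abs,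
        abs_of_pos (by positivity : (0:ℝ) < α * ‖x‖ ^ 2)]
      field_simp
  -- the integrand is a function of the norm
  have hcongr : ∫ x : E, ‖Fmap d α x‖ ^ 2 * (C * Real.exp (-‖x‖ ^ 2 / 2)) =
      ∫ x : E, f ‖x‖ := by
    congr 1; funext x
    rw [hnorm x, hf]
    simp only []
    rw [Real.rpow_two]
    ring_nf
  -- spherical coordinates
  have hsph : ∀ h : ℝ → ℝ, ∫ x : E, h ‖x‖ =
      (d : ℝ) * V * ∫ y in Set.Ioi (0:ℝ), y ^ (d - 1) * h y := by
    intro h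
    rw [integral_fun_norm_addHaar (volume : Measure E) h, hdim]
    simp [nsmul_eq_mul, smul_eq_mul, mul_assoc]
    exact Or.inl (Or.inl rfl)
  have hpow : ∀ y : ℝ, y ∈ Set.Ioi (0:ℝ) → (y:ℝ) ^ (d - 1 : ℕ) = y ^ ((d:ℝ) - 1) := by
    intro y hy
    rw [← Real.rpow_natCast y (d - 1), Nat.cast_sub (by omega), Nat.cast_one]
  -- second moment radial integral
  have hIoi2 : ∫ y in Set.Ioi (0:ℝ), y ^ (d - 1) * f y
      = (α ^ 2)⁻¹ * C * ∫ y in Set.Ioi (0:ℝ),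
          y ^ ((d:ℝ) - 3) * Real.exp (-(1/2) * y ^ (2:ℝ)) := by
    rw [← integral_const_mul]
    refine setIntegral_congr_fun measurableSet_Ioi (fun y hy => ?_)
    have hy0 : (0:ℝ) < y := hy
    have h2 : y ^ ((d:ℝ) - 3) = y ^ ((d:ℝ) - 1) * (y ^ 2)⁻¹ := by
      rw [← Real.rpow_natCast y 2, ← Real.rpow_neg hy0.le, ← Real.rpow_add hy0]
      congr 1; push_cast; ring
    rw [hpow y hy, hf]
    simp only []
    rw [h2]
    field_simp
  have hI2 : ∫ y in Set.Ioi (0:ℝ), y ^ ((d:ℝ) - 3) * Real.exp (-(1/2) * y ^ (2:ℝ))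
      = P * (1/2) * G := by
    rw [integral_rpow_mul_exp_neg_mul_rpow (by norm_num : (0:ℝ) < 2)
      (by linarith : (-1:ℝ) < (d:ℝ) - 3) (by norm_num : (0:ℝ) < 1/2)]
    rw [show ((d:ℝ) - 3 + 1) / 2 = ((d:ℝ) - 2) / 2 by ring,
      show (-((d:ℝ) - 3 + 1)) / 2 = (-((d:ℝ) - 2)) / 2 by ring]
  have hGamma : Real.Gamma ((d:ℝ) / 2) = (((d:ℝ) - 2) / 2) * G := by
    rw [show (d:ℝ)/2 = ((d:ℝ) - 2)/2 + 1 by ring,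
      Real.Gamma_add_one (by intro h; nlinarith)]
  have hI1 : ∫ y in Set.Ioi (0:ℝ), y ^ ((d:ℝ) - 1) * Real.exp (-(1/2) * y ^ (2:ℝ))
      = P * (((d:ℝ) - 2) / 2) * G := by
    rw [integral_rpow_mul_exp_neg_mul_rpow (by norm_num : (0:ℝ) < 2)
      (by linarith : (-1:ℝ) < (d:ℝ) - 1) (by norm_num : (0:ℝ) < 1/2)]
    rw [show ((d:ℝ) - 1 + 1) / 2 = (d:ℝ) / 2 by ring, hGamma,
      show (-((d:ℝ) - 1 + 1)) / 2 = (-((d:ℝ) - 2)) / 2 + (-1) by ring,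
      Real.rpow_add (by norm_num : (0:ℝ) < 1/2), Real.rpow_neg_one]
    rw [← hP]
    ring
  -- total mass
  have htot : (d : ℝ) * V * (P * (((d:ℝ) - 2) / 2) * G) = Q := by
    rw [← hI1]
    have h1 : ∫ x : E, Real.exp (-(1/2) * ‖x‖ ^ 2) = Q := by
      rw [GaussianFourier.integral_rexp_neg_mul_sq_norm (by norm_num : (0:ℝ) < 1/2), hdim, hQ]
      congr 1
      ring
    have h2 : ∫ x : E, Real.exp (-(1/2) * ‖x‖ ^ 2) = ∫ x : E, g ‖x‖ := by
      congr 1; funext x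
      rw [hg]; simp only []; rw [Real.rpow_two]
    rw [← h1, h2, hsph g]
    congr 1
    refine setIntegral_congr_fun measurableSet_Ioi (fun y hy => ?_)
    rw [hpow y hy, hg]
  -- put it together
  have hCQ : C = Q⁻¹ := by
    rw [hC, hQ, ← Real.rpow_neg (by positivity : (0:ℝ) ≤ 2 * π)]
    congr 1; ring
  calc ∫ x : E, ‖Fmap d α x‖ ^ 2 * (C * Real.exp (-‖x‖ ^ 2 / 2))
      = (d : ℝ) * V * ((α ^ 2)⁻¹ * C * (P * (1/2) * G)) := by
        rw [hcongr, hsph f, hIoi2, hI2]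
    _ = 1 / (α ^ 2 * ((d : ℝ) - 2)) := by
        have hd2 : (0:ℝ) < (d:ℝ) - 2 := by linarith
        have hden : P * (((d:ℝ) - 2) / 2) * G ≠ 0 := by positivity
        have hdV : (d : ℝ) * V = Q / (P * (((d:ℝ) - 2) / 2) * G) := by
          rw [eq_div_iff hden]
          exact htot
        have hne : α ^ 2 * ((d:ℝ) - 2) ≠ 0 :=
          mul_ne_zero (pow_ne_zero _ hα.ne') hd2.ne'
        rw [hdV, hCQ, eq_div_iff hne]
        field_simp

/-- For `d > 2` and `α > 0`, with `X` standard Gaussian in `ℝ^d`,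
`E[‖F_α(X)‖²] = 1/(α²(d−2))`, and consequently this loss tends to `0` as `α → ∞`. -/
theorem deepSVDD_loss_of_Fmap (d : ℕ) (hd : 2 < d) :
    (∀ α : ℝ, 0 < α →
      ∫ x : EuclideanSpace ℝ (Fin d),
        ‖Fmap d α x‖ ^ 2 * ((2 * π) ^ (-(d : ℝ) / 2) * Real.exp (-‖x‖ ^ 2 / 2)) =
        1 / (α ^ 2 * ((d : ℝ) - 2))) ∧
    Tendsto (fun α : ℝ =>
      ∫ x : EuclideanSpace ℝ (Fin d),
        ‖Fmap d α x‖ ^ 2 * ((2 * π) ^ (-(d : ℝ) / 2) * Real.exp (-‖x‖ ^ 2 / 2)))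
      atTop (nhds 0) := by
  refine ⟨fun α hα => deepSVDD_key d hd α hα, ?_⟩
  have h1 : ∀ᶠ α : ℝ in atTop,
      (∫ x : EuclideanSpace ℝ (Fin d),
        ‖Fmap d α x‖ ^ 2 * ((2 * π) ^ (-(d : ℝ) / 2) * Real.exp (-‖x‖ ^ 2 / 2))) =
      1 / (α ^ 2 * ((d : ℝ) - 2)) := by
    filter_upwards [eventually_gt_atTop (0:ℝ)] with α hα
    exact deepSVDD_key d hd α hα
  rw [tendsto_congr' h1]
  have hd2 : (0:ℝ) < (d:ℝ) - 2 := by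
    have : (3:ℝ) ≤ (d:ℝ) := by exact_mod_cast hd
    linarith
  have h2 : Tendsto (fun α : ℝ => α ^ 2 * ((d : ℝ) - 2)) atTop atTop :=
    (tendsto_pow_atTop (by norm_num)).atTop_mul_const hd2
  simpa [one_div, Pi.inv_def] using h2.inv_tendsto_atTop
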